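/- arXiv:2312.01299 — 2 statements merged into one kernel-verified Lean document; each statement's English description precedes it below -/
import Mathlib

section
/- Let d ≥ 1, σ > 0, B ≥ 1, let θ_1, …, θ_B ∈ ℝ^d, and let c_1, …, c_B > 0 be positive weights. Define K_σ(x) = (1/σ)·exp(−‖x‖²/(2σ)), f(θ) = (1/B) Σ_{i=1}^B K_σ(θ − θ_i), and the weighted (conditional) estimate g(θ) = Σ_{i=1}^B c_i K_σ(θ − θ_i) / Σ_{i=1}^B c_i. Then the function θ ↦ log g(θ) − log f(θ) is differentiable with gradient ∇(log g − log f)(θ) = (1/σ) Σ_{i=1}^B (μ'_i(θ) − μ_i(θ))·θ_i, where μ'_i(θ) = c_i K_σ(θ − θ_i) / Σ_{j=1}^B c_j K_σ(θ − θ_j) and μ_i(θ) = K_σ(θ − θ_i) / Σ_{j=1}^B K_σ(θ − θ_j). -/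
/-- The Gaussian kernel `K_σ(x) = (1/σ)·exp(−‖x‖²/(2σ))` on `ℝ^d` (equation (9)). -/
noncomputable def gaussKernel {d : ℕ} (σ : ℝ) (x : EuclideanSpace ℝ (Fin d)) : ℝ :=
  (1 / σ) * Real.exp (-‖x‖ ^ 2 / (2 * σ))

open InnerProductSpace


lemma gauss_pos {d : ℕ} {σ : ℝ} (hσ : 0 < σ) (x : EuclideanSpace ℝ (Fin d)) :
    0 < gaussKernel σ x := by
  unfold gaussKernel
  positivity

lemma gauss_hasFDerivAt {d : ℕ} {σ : ℝ} (hσ : 0 < σ) (p θ : EuclideanSpace ℝ (Fin d)) :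
    HasFDerivAt (fun x => gaussKernel σ (x - p))
      ((gaussKernel σ (θ - p) * σ⁻¹) • innerSL ℝ (p - θ)) θ := by
  have hfun : (fun x : EuclideanSpace ℝ (Fin d) => gaussKernel σ (x - p))
      = fun x => (1 / σ) * Real.exp ((-(2 * σ)⁻¹) * (inner ℝ (x - p) (x - p) : ℝ)) := by
    funext x
    rw [gaussKernel, real_inner_self_eq_norm_sq]
    congr 1
    ring
  rw [hfun]
  have hsub : HasFDerivAt (fun x : EuclideanSpace ℝ (Fin d) => x - p)
      (ContinuousLinearMap.id ℝ _) θ := (hasFDerivAt_id θ).sub_const p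
  have hin := hsub.inner ℝ hsub
  have hq := hin.const_mul (-(2 * σ)⁻¹)
  have hexp := hq.exp
  have hfinal := hexp.const_mul (1 / σ)
  refine hfinal.congr_fderiv ?_
  ext w
  have : gaussKernel σ (θ - p) = (1/σ) * Real.exp ((-(2 * σ)⁻¹) * (inner ℝ (θ - p) (θ - p) : ℝ)) := by
    rw [gaussKernel, real_inner_self_eq_norm_sq]; congr 1; ring
  simp only [ContinuousLinearMap.smul_apply, innerSL_apply_apply, ContinuousLinearMap.coe_smul',
    Pi.smul_apply, ContinuousLinearMap.coe_comp', Function.comp_apply,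
    ContinuousLinearMap.prod_apply, ContinuousLinearMap.coe_id', id_eq,
    fderivInnerCLM_apply, this, smul_eq_mul]
  rw [inner_sub_left (𝕜 := ℝ) p θ w, real_inner_comm (θ - p) w, inner_sub_left (𝕜 := ℝ) θ p w]
  field_simp
  ring

lemma scalar_key {n : ℕ} (k c x : Fin n → ℝ) (y σ : ℝ) (hσ : σ ≠ 0)
    (hS : (∑ i, c i * k i) ≠ 0) (hT : (∑ i, k i) ≠ 0) :
    (1/σ) * ∑ i, (c i * k i / (∑ j, c j * k j) - k i / (∑ j, k j)) * x i
      = (∑ j, c j * k j)⁻¹ * (∑ i, c i * (k i * σ⁻¹ * (x i - y)))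
        - (∑ j, k j)⁻¹ * (∑ i, k i * σ⁻¹ * (x i - y)) := by
  set S := ∑ j, c j * k j with hSdef
  set T := ∑ j, k j with hTdef
  have h1 : ∑ i, (c i * k i / S - k i / T) * x i
      = (∑ i, c i * k i * x i) * S⁻¹ - (∑ i, k i * x i) * T⁻¹ := by
    calc ∑ i, (c i * k i / S - k i / T) * x i
        = ∑ i, ((c i * k i * x i) * S⁻¹ - (k i * x i) * T⁻¹) :=
          Finset.sum_congr rfl fun i _ => by ring
      _ = _ := by rw [Finset.sum_sub_distrib, ← Finset.sum_mul, ← Finset.sum_mul]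
  have h2 : ∑ i, c i * (k i * σ⁻¹ * (x i - y))
      = σ⁻¹ * ((∑ i, c i * k i * x i) - S * y) := by
    calc ∑ i, c i * (k i * σ⁻¹ * (x i - y))
        = ∑ i, (σ⁻¹ * (c i * k i * x i) - σ⁻¹ * (c i * k i * y)) :=
          Finset.sum_congr rfl fun i _ => by ring
      _ = _ := by
          rw [Finset.sum_sub_distrib, ← Finset.mul_sum, ← Finset.mul_sum, mul_sub, hSdef,
            Finset.sum_mul]
  have h3 : ∑ i, k i * σ⁻¹ * (x i - y)
      = σ⁻¹ * ((∑ i, k i * x i) - T * y) := by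
    calc ∑ i, k i * σ⁻¹ * (x i - y)
        = ∑ i, (σ⁻¹ * (k i * x i) - σ⁻¹ * (k i * y)) :=
          Finset.sum_congr rfl fun i _ => by ring
      _ = _ := by
          rw [Finset.sum_sub_distrib, ← Finset.mul_sum, ← Finset.mul_sum, mul_sub, hTdef,
            Finset.sum_mul]
  rw [h1, h2, h3]
  field_simp
  ring

/-- Equations (13)–(15): for the KDE `f θ = (1/B) ∑ᵢ K_σ(θ − θᵢ)` and the weighted
(conditional) estimate `g θ = ∑ᵢ cᵢ K_σ(θ − θᵢ) / ∑ᵢ cᵢ` with weights `cᵢ > 0`,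
the function `log g − log f` is differentiable with gradient
`(1/σ) ∑ᵢ (μ'ᵢ(θ) − μᵢ(θ)) • θᵢ`, where
`μ'ᵢ(θ) = cᵢ K_σ(θ − θᵢ) / ∑ⱼ cⱼ K_σ(θ − θⱼ)` and
`μᵢ(θ) = K_σ(θ − θᵢ) / ∑ⱼ K_σ(θ − θⱼ)`. -/
theorem conditional_kde_log_diff_hasGradientAt
    (d B : ℕ) (hd : 1 ≤ d) (hB : 1 ≤ B) (σ : ℝ) (hσ : 0 < σ)
    (θs : Fin B → EuclideanSpace ℝ (Fin d))
    (c : Fin B → ℝ) (hc : ∀ i, 0 < c i) :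
    ∀ θ : EuclideanSpace ℝ (Fin d),
      HasGradientAt
        (fun θ' : EuclideanSpace ℝ (Fin d) =>
          Real.log ((∑ i, c i * gaussKernel σ (θ' - θs i)) / ∑ i, c i)
            - Real.log ((1 / (B : ℝ)) * ∑ i, gaussKernel σ (θ' - θs i)))
        ((1 / σ) • ∑ i,
          ((c i * gaussKernel σ (θ - θs i) / ∑ j, c j * gaussKernel σ (θ - θs j))
            - gaussKernel σ (θ - θs i) / ∑ j, gaussKernel σ (θ - θs j)) • θs i)
        θ := by
  intro θ
  have hBpos : (0:ℝ) < B := by exact_mod_cast hB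
  have hkpos : ∀ i, 0 < gaussKernel σ (θ - θs i) := fun i => gauss_pos hσ _
  haveI : Nonempty (Fin B) := Fin.pos_iff_nonempty.mp hB
  have hne : (Finset.univ : Finset (Fin B)).Nonempty := Finset.univ_nonempty
  have hSpos : 0 < ∑ i, c i * gaussKernel σ (θ - θs i) :=
    Finset.sum_pos (fun i _ => mul_pos (hc i) (hkpos i)) hne
  have hTpos : 0 < ∑ i, gaussKernel σ (θ - θs i) :=
    Finset.sum_pos (fun i _ => hkpos i) hne
  have hCpos : 0 < ∑ i, c i := Finset.sum_pos (fun i _ => hc i) hne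
  -- derivatives of the two sums
  have hS : HasFDerivAt (fun x => ∑ i, c i * gaussKernel σ (x - θs i))
      (∑ i, c i • ((gaussKernel σ (θ - θs i) * σ⁻¹) • innerSL ℝ (θs i - θ))) θ :=
    HasFDerivAt.fun_sum fun i _ => (gauss_hasFDerivAt hσ (θs i) θ).const_mul (c i)
  have hT : HasFDerivAt (fun x => ∑ i, gaussKernel σ (x - θs i))
      (∑ i, (gaussKernel σ (θ - θs i) * σ⁻¹) • innerSL ℝ (θs i - θ)) θ :=
    HasFDerivAt.fun_sum fun i _ => gauss_hasFDerivAt hσ (θs i) θ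
  -- divide by constants
  have hdivfun : (fun x => (∑ i, c i * gaussKernel σ (x - θs i)) / ∑ i, c i)
      = fun x => (∑ i, c i)⁻¹ * (∑ i, c i * gaussKernel σ (x - θs i)) := by
    funext x; rw [div_eq_inv_mul]
  have hSdiv : HasFDerivAt (fun x => (∑ i, c i * gaussKernel σ (x - θs i)) / ∑ i, c i)
      ((∑ i, c i)⁻¹ • (∑ i, c i • ((gaussKernel σ (θ - θs i) * σ⁻¹) • innerSL ℝ (θs i - θ)))) θ := by
    rw [hdivfun]; exact hS.const_mul _
  have hTdiv : HasFDerivAt (fun x => (1 / (B : ℝ)) * ∑ i, gaussKernel σ (x - θs i))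
      ((1 / (B : ℝ)) • (∑ i, (gaussKernel σ (θ - θs i) * σ⁻¹) • innerSL ℝ (θs i - θ))) θ :=
    hT.const_mul _
  -- logs
  have hg1 := hSdiv.log (by positivity)
  have hg2 := hTdiv.log (by positivity)
  have htot := hg1.sub hg2
  have hD : (((∑ i, c i * gaussKernel σ (θ - θs i)) / ∑ i, c i)⁻¹ •
        ((∑ i, c i)⁻¹ • (∑ i, c i • ((gaussKernel σ (θ - θs i) * σ⁻¹) • innerSL ℝ (θs i - θ))))
      - ((1 / (B : ℝ)) * ∑ i, gaussKernel σ (θ - θs i))⁻¹ •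
        ((1 / (B : ℝ)) • (∑ i, (gaussKernel σ (θ - θs i) * σ⁻¹) • innerSL ℝ (θs i - θ))))
      = (toDual ℝ (EuclideanSpace ℝ (Fin d)))
        ((1 / σ) • ∑ i,
          ((c i * gaussKernel σ (θ - θs i) / ∑ j, c j * gaussKernel σ (θ - θs j))
            - gaussKernel σ (θ - θs i) / ∑ j, gaussKernel σ (θ - θs j)) • θs i) := by
    ext w
    simp only [ContinuousLinearMap.sub_apply, ContinuousLinearMap.smul_apply,
      ContinuousLinearMap.coe_smul', Pi.smul_apply, ContinuousLinearMap.sum_apply,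
      innerSL_apply_apply, toDual_apply_apply, smul_eq_mul]
    rw [real_inner_smul_left, sum_inner]
    have hinner : ∀ i : Fin B, (inner ℝ ((((c i * gaussKernel σ (θ - θs i) / ∑ j, c j * gaussKernel σ (θ - θs j))
            - gaussKernel σ (θ - θs i) / ∑ j, gaussKernel σ (θ - θs j))) • θs i) w : ℝ)
        = ((c i * gaussKernel σ (θ - θs i) / ∑ j, c j * gaussKernel σ (θ - θs j))
            - gaussKernel σ (θ - θs i) / ∑ j, gaussKernel σ (θ - θs j)) * (inner ℝ (θs i) w : ℝ) :=
      fun i => real_inner_smul_left _ _ _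
    rw [Finset.sum_congr rfl fun i _ => hinner i]
    have hsub : ∀ i : Fin B, (inner ℝ (θs i - θ) w : ℝ) = (inner ℝ (θs i) w : ℝ) - (inner ℝ θ w : ℝ) :=
      fun i => inner_sub_left _ _ _
    simp only [hsub]
    have key : (1/σ) * ∑ i : Fin B, ((c i * gaussKernel σ (θ - θs i) / ∑ j, c j * gaussKernel σ (θ - θs j))
            - gaussKernel σ (θ - θs i) / ∑ j, gaussKernel σ (θ - θs j)) * (inner ℝ (θs i) w : ℝ)
        = (∑ j, c j * gaussKernel σ (θ - θs j))⁻¹ *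
            (∑ i, c i * (gaussKernel σ (θ - θs i) * σ⁻¹ * ((inner ℝ (θs i) w : ℝ) - (inner ℝ θ w : ℝ))))
          - (∑ j, gaussKernel σ (θ - θs j))⁻¹ *
            (∑ i, gaussKernel σ (θ - θs i) * σ⁻¹ * ((inner ℝ (θs i) w : ℝ) - (inner ℝ θ w : ℝ))) :=
      scalar_key (fun i => gaussKernel σ (θ - θs i)) c (fun i => (inner ℝ (θs i) w : ℝ))
      (inner ℝ θ w : ℝ) σ (ne_of_gt hσ) (ne_of_gt hSpos) (ne_of_gt hTpos)
    rw [eq_comm]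
    calc _ = (1/σ) * ∑ i, ((c i * gaussKernel σ (θ - θs i) / ∑ j, c j * gaussKernel σ (θ - θs j))
            - gaussKernel σ (θ - θs i) / ∑ j, gaussKernel σ (θ - θs j)) * (inner ℝ (θs i) w : ℝ) := by
          norm_num
      _ = _ := by
          rw [key]
          have e1 : (((∑ i, c i * gaussKernel σ (θ - θs i)) / ∑ i, c i)⁻¹ * (∑ i, c i)⁻¹)
              = (∑ i, c i * gaussKernel σ (θ - θs i))⁻¹ := by
            field_simp
          have e2 : (((1 / (B : ℝ)) * ∑ i, gaussKernel σ (θ - θs i))⁻¹ * (1 / (B : ℝ)))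
              = (∑ i, gaussKernel σ (θ - θs i))⁻¹ := by
            field_simp
          rw [← e1, ← e2]
          ring
  exact hasGradientAt_iff_hasFDerivAt.mpr (hD ▸ htot)
end

section
/- Let m ≥ 1, let F be an m×m real matrix such that Fⁿ → 0 as n → ∞ (entrywise), let L and ξ be linear functionals on ℝ^m, and let u : ℕ → (ℝ^m → ℝ) satisfy u(0)(σ) = L(σ) and u(n+1)(σ) = u(n)(F·σ) + ξ(σ) for all n and σ. Then for every σ ∈ ℝ^m, the sequence n ↦ u(n)((I − F)·σ) converges to ξ(σ). -/
open Filter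

/-- Mean-square steady state, equation (49): if `Fⁿ → 0` entrywise and
`u 0 σ = L σ`, `u (n+1) σ = u n (F·σ) + ξ σ`, then for every `σ`,
`u n ((I − F)·σ) → ξ σ` as `n → ∞`. -/
theorem steady_state_limit
    (m : ℕ) (hm : 1 ≤ m)
    (F : Matrix (Fin m) (Fin m) ℝ)
    (hF : ∀ i j, Tendsto (fun n : ℕ => (F ^ n) i j) atTop (nhds 0))
    (L ξ : (Fin m → ℝ) →ₗ[ℝ] ℝ)
    (u : ℕ → (Fin m → ℝ) → ℝ)
    (h0 : ∀ σ, u 0 σ = L σ)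
    (hrec : ∀ n σ, u (n + 1) σ = u n (F.mulVec σ) + ξ σ) :
    ∀ σ : Fin m → ℝ,
      Tendsto (fun n : ℕ => u n ((1 - F).mulVec σ)) atTop (nhds (ξ σ)) := by
  -- closed form
  have hclosed : ∀ n σ, u n σ =
      L ((F ^ n).mulVec σ) + ∑ k ∈ Finset.range n, ξ ((F ^ k).mulVec σ) := by
    intro n
    induction n with
    | zero =>
        intro σ
        simp [h0, Matrix.one_mulVec]
    | succ n ih =>
        intro σ
        rw [hrec, ih (F.mulVec σ), Finset.sum_range_succ']
        simp only [Matrix.mulVec_mulVec]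
        have h1 : F ^ n * F = F ^ (n + 1) := by
          rw [pow_succ]
        have h2 : ∀ k, F ^ k * F = F ^ (k + 1) := fun k => by rw [pow_succ]
        rw [h1]
        simp only [h2, pow_zero, Matrix.one_mulVec]
        ring
  intro σ
  -- telescoping the sum at (1 - F) σ
  have hform : ∀ n, u n ((1 - F).mulVec σ) =
      L ((F ^ n).mulVec ((1 - F).mulVec σ)) + (ξ σ - ξ ((F ^ n).mulVec σ)) := by
    intro n
    rw [hclosed]
    congr 1
    have : ∀ k, ξ ((F ^ k).mulVec ((1 - F).mulVec σ))
        = ξ ((F ^ k).mulVec σ) - ξ ((F ^ (k + 1)).mulVec σ) := by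
      intro k
      rw [Matrix.mulVec_mulVec, mul_sub, mul_one, pow_succ]
      rw [Matrix.sub_mulVec, map_sub]
    simp only [this]
    rw [Finset.sum_range_sub']
    simp [pow_zero, Matrix.one_mulVec]
  -- F^n.mulVec v → 0 for any v
  have hvec : ∀ v : Fin m → ℝ,
      Tendsto (fun n : ℕ => (F ^ n).mulVec v) atTop (nhds 0) := by
    intro v
    rw [tendsto_pi_nhds]
    intro i
    have : Tendsto (fun n : ℕ => ∑ j, (F ^ n) i j * v j) atTop (nhds (∑ j : Fin m, 0)) := by
      apply tendsto_finset_sum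
      intro j _
      simpa using (hF i j).mul_const (v j)
    simpa [Matrix.mulVec, dotProduct] using this
  have hLcont : Continuous L := L.continuous_of_finiteDimensional
  have hξcont : Continuous ξ := ξ.continuous_of_finiteDimensional
  have h1 : Tendsto (fun n : ℕ => L ((F ^ n).mulVec ((1 - F).mulVec σ))) atTop (nhds 0) := by
    have := (hLcont.tendsto 0).comp (hvec ((1 - F).mulVec σ))
    simpa [Function.comp_def] using this
  have h2 : Tendsto (fun n : ℕ => ξ ((F ^ n).mulVec σ)) atTop (nhds 0) := by
    have := (hξcont.tendsto 0).comp (hvec σ)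
    simpa [Function.comp_def] using this
  have := h1.add (tendsto_const_nhds.sub h2 : Tendsto (fun n : ℕ => ξ σ - ξ ((F ^ n).mulVec σ)) atTop (nhds (ξ σ - 0)))
  simp only [zero_add, sub_zero] at this
  exact this.congr (fun n => (hform n).symm)
end
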